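/- Let p be a prime and let R be a perfect 𝔽_p-algebra. Let q : Ã → A be a surjective ring homomorphism of commutative rings such that both Ã and A are p-adically complete and the kernel of q is square-zero, i.e. (ker q)² = 0. Then every ring homomorphism f : W(R) → A lifts uniquely along q: there exists a unique ring homomorphism f̃ : W(R) → Ã with q ∘ f̃ = f. -/

import Mathlib

open Finset Function

namespace Stmt11Aux

variable {p : ℕ} [hp : Fact p.Prime]

/-- Square-zero binomial expansion. -/
lemma sqz_add_pow {S : Type*} [CommRing S] {κ : S} (hκ : κ * κ = 0) (u : S) :
    ∀ m : ℕ, (u + κ) ^ (m + 1) = u ^ (m + 1) + ((m : S) + 1) * u ^ m * κ := by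
  intro m
  induction m with
  | zero => push_cast; ring
  | succ m ih =>
      have expand : (u ^ (m + 1) + ((m : S) + 1) * u ^ m * κ) * (u + κ)
          = u ^ (m + 2) + ((m : S) + 2) * u ^ (m + 1) * κ
            + ((m : S) + 1) * u ^ m * (κ * κ) := by ring
      calc (u + κ) ^ (m + 2) = (u + κ) ^ (m + 1) * (u + κ) := by ring
        _ = (u ^ (m + 1) + ((m : S) + 1) * u ^ m * κ) * (u + κ) := by rw [ih]
        _ = u ^ (m + 2) + ((m : S) + 2) * u ^ (m + 1) * κ
            + ((m : S) + 1) * u ^ m * (κ * κ) := expand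
        _ = u ^ (m + 1 + 1) + (((m : S) + 1) + 1) * u ^ (m + 1) * κ := by rw [hκ]; ring
        _ = u ^ (m + 1 + 1) + ((((m+1 : ℕ) : S)) + 1) * u ^ (m + 1) * κ := by push_cast; ring

lemma ghost_sum {S : Type*} [CommRing S] (n : ℕ) (x : WittVector p S) :
    WittVector.ghostComponent n x
      = ∑ i ∈ range (n + 1), (p : S) ^ i * x.coeff i ^ p ^ (n - i) := by
  rw [WittVector.ghostComponent_apply, aeval_wittPolynomial]

lemma ghost_dvd {S : Type*} [CommRing S] (n : ℕ) {X Y : WittVector p S}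
    (h : ∀ i, (p : S) ∣ X.coeff i - Y.coeff i) :
    (p : S) ^ (n + 1) ∣ WittVector.ghostComponent n X - WittVector.ghostComponent n Y := by
  rw [ghost_sum, ghost_sum, ← Finset.sum_sub_distrib]
  apply Finset.dvd_sum
  intro i hi
  rw [Finset.mem_range, Nat.lt_succ_iff] at hi
  rw [← mul_sub]
  have h1 : (p : S) ^ (n - i + 1) ∣ X.coeff i ^ p ^ (n - i) - Y.coeff i ^ p ^ (n - i) :=
    dvd_sub_pow_of_dvd_sub (h i) _
  have h2 : (p : S) ^ (n + 1) ∣ (p : S) ^ i * (p : S) ^ (n - i + 1) := by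
    rw [← pow_add]
    apply pow_dvd_pow
    omega
  exact h2.trans (mul_dvd_mul_left _ h1)

end Stmt11Aux
section PerfectWitt

variable {p : ℕ} [hp : Fact p.Prime]
variable {R : Type*} [CommRing R] [CharP R p] [PerfectRing R p]

lemma pow_p_inj (i : ℕ) : Function.Injective (fun c : R => c ^ p ^ i) := by
  have : (fun c : R => c ^ p ^ i) = ⇑(iterateFrobeniusEquiv R p i) := rfl
  rw [this]
  exact (iterateFrobeniusEquiv R p i).injective

lemma E_pow (i : ℕ) (c : R) : ((iterateFrobeniusEquiv R p i).symm c) ^ p ^ i = c := by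
  have := (iterateFrobeniusEquiv R p i).apply_symm_apply c
  rwa [iterateFrobeniusEquiv_def] at this

lemma E_pow_partial {k m : ℕ} (h : m ≤ k) (c : R) :
    ((iterateFrobeniusEquiv R p k).symm c) ^ p ^ m
      = (iterateFrobeniusEquiv R p (k - m)).symm c := by
  apply pow_p_inj (p := p) (k - m)
  simp only
  rw [← pow_mul, ← pow_add, E_pow]
  have : m + (k - m) = k := by omega
  rw [this, E_pow]

lemma E_zero_apply (c : R) : (iterateFrobeniusEquiv R p 0).symm c = c := by
  apply pow_p_inj (p := p) 0
  show ((iterateFrobeniusEquiv R p 0).symm c) ^ p ^ 0 = c ^ p ^ 0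
  rw [E_pow, pow_zero, pow_one]

lemma E_succ_apply (i : ℕ) (c : R) :
    (frobeniusEquiv R p).symm ((iterateFrobeniusEquiv R p i).symm c)
      = (iterateFrobeniusEquiv R p (i + 1)).symm c := by
  apply pow_p_inj (p := p) (i + 1)
  have hy : ∀ y : R, ((frobeniusEquiv R p).symm y) ^ p = y := fun y => by
    have := frobenius_apply_frobeniusEquiv_symm R p y
    rwa [frobenius_def] at this
  show ((frobeniusEquiv R p).symm ((iterateFrobeniusEquiv R p i).symm c)) ^ p ^ (i+1)
      = ((iterateFrobeniusEquiv R p (i + 1)).symm c) ^ p ^ (i+1)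
  rw [E_pow, pow_succ', pow_mul, hy, E_pow]

end PerfectWitt
section WittExpand

variable {p : ℕ} [hp : Fact p.Prime]
variable {R : Type*} [CommRing R] [CharP R p] [PerfectRing R p]

local notation "𝕎" => WittVector p

lemma frobenius_symm_section (z : 𝕎 R) :
    WittVector.frobenius ((WittVector.frobeniusEquiv p R).symm z) = z := by
  have := (WittVector.frobeniusEquiv p R).apply_symm_apply z
  rwa [WittVector.frobeniusEquiv_apply] at this

lemma exists_eq_mul_p_of_coeff_zero (d : 𝕎 R) (h : d.coeff 0 = 0) :
    ∃ z : 𝕎 R, d = z * (p : 𝕎 R) := by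
  refine ⟨(WittVector.frobeniusEquiv p R).symm (WittVector.mk p fun j => d.coeff (j + 1)), ?_⟩
  rw [← WittVector.verschiebung_frobenius, frobenius_symm_section]
  ext j
  cases j with
  | zero => rw [WittVector.verschiebung_coeff_zero, h]
  | succ j =>
      rw [WittVector.verschiebung_coeff_succ, WittVector.coeff_mk]

lemma ghost_zero_eq_coeff_zero (x : 𝕎 R) : WittVector.ghostComponent 0 x = x.coeff 0 := by
  rw [Stmt11Aux.ghost_sum]
  simp

lemma teichmuller_add_defect (a b : R) :
    ∃ z : 𝕎 R, WittVector.teichmuller p (a + b)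
      = WittVector.teichmuller p a + WittVector.teichmuller p b + z * (p : 𝕎 R) := by
  set d : 𝕎 R := WittVector.teichmuller p (a + b) - WittVector.teichmuller p a
      - WittVector.teichmuller p b with hd
  have h0 : d.coeff 0 = 0 := by
    rw [← ghost_zero_eq_coeff_zero, hd, map_sub, map_sub]
    simp only [WittVector.ghostComponent_teichmuller, pow_zero, pow_one]
    ring
  obtain ⟨z, hz⟩ := exists_eq_mul_p_of_coeff_zero d h0
  refine ⟨z, ?_⟩
  rw [← hz, hd]; ring

lemma verschiebung_teichmuller (c : R) :
    WittVector.verschiebung (WittVector.teichmuller p c)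
      = WittVector.teichmuller p ((frobeniusEquiv R p).symm c) * (p : 𝕎 R) := by
  have key : WittVector.frobenius (WittVector.teichmuller p ((frobeniusEquiv R p).symm c))
      = WittVector.teichmuller p c := by
    rw [WittVector.frobenius_eq_map_frobenius, WittVector.map_teichmuller,
      frobenius_apply_frobeniusEquiv_symm]
  calc WittVector.verschiebung (WittVector.teichmuller p c)
      = WittVector.verschiebung
          (WittVector.frobenius (WittVector.teichmuller p ((frobeniusEquiv R p).symm c))) := by
        rw [key]
    _ = WittVector.teichmuller p ((frobeniusEquiv R p).symm c) * (p : 𝕎 R) := by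
        rw [WittVector.verschiebung_frobenius]

lemma verschiebung_mul_p_comm (z : 𝕎 R) :
    ∃ w : 𝕎 R, WittVector.verschiebung z = w * (p : 𝕎 R) := by
  refine ⟨(WittVector.frobeniusEquiv p R).symm z, ?_⟩
  conv_lhs => rw [← frobenius_symm_section (p := p) z]
  rw [WittVector.verschiebung_frobenius]

lemma iterate_verschiebung_teichmuller (i : ℕ) (c : R) :
    WittVector.verschiebung^[i] (WittVector.teichmuller p c)
      = WittVector.teichmuller p ((iterateFrobeniusEquiv R p i).symm c) * (p : 𝕎 R) ^ i := by
  induction i with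
  | zero => simp [E_zero_apply]
  | succ i ih =>
      rw [Function.iterate_succ_apply', ih]
      have hcast : (p : 𝕎 R) ^ i = ((p ^ i : ℕ) : 𝕎 R) := by push_cast; ring
      have hsmul : WittVector.teichmuller p ((iterateFrobeniusEquiv R p i).symm c) * (p : 𝕎 R) ^ i
          = (p ^ i : ℕ) • WittVector.teichmuller p ((iterateFrobeniusEquiv R p i).symm c) := by
        rw [nsmul_eq_mul, mul_comm, hcast]
      rw [hsmul, map_nsmul, verschiebung_teichmuller, E_succ_apply]
      rw [nsmul_eq_mul]
      push_cast
      ring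

lemma iterate_verschiebung_coeff_of_lt (x : 𝕎 R) {n j : ℕ} (h : j < n) :
    (WittVector.verschiebung^[n] x).coeff j = 0 := by
  induction n generalizing j with
  | zero => omega
  | succ n ih =>
      rw [Function.iterate_succ_apply']
      cases j with
      | zero => exact WittVector.verschiebung_coeff_zero _
      | succ j => rw [WittVector.verschiebung_coeff_succ]; exact ih (by omega)

lemma coeff_sum_teich (x : 𝕎 R) (n j : ℕ) :
    (∑ i ∈ Finset.range n,
      WittVector.verschiebung^[i] (WittVector.teichmuller p (x.coeff i))).coeff j
      = if j < n then x.coeff j else 0 := by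
  induction n generalizing j with
  | zero => simp
  | succ n ih =>
      rw [Finset.sum_range_succ]
      have hdisj : ∀ k, (∑ i ∈ Finset.range n,
          WittVector.verschiebung^[i] (WittVector.teichmuller p (x.coeff i))).coeff k = 0 ∨
          (WittVector.verschiebung^[n] (WittVector.teichmuller p (x.coeff n))).coeff k = 0 := by
        intro k
        by_cases hk : k < n
        · right; exact iterate_verschiebung_coeff_of_lt _ hk
        · left; rw [ih, if_neg hk]
      rw [WittVector.coeff_add_of_disjoint _ _ _ hdisj]
      · rw [ih]
        rcases lt_trichotomy j n with h | h | h
        · rw [if_pos h, if_pos (by omega), iterate_verschiebung_coeff_of_lt _ h, add_zero]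
        · subst h
          rw [if_neg (by omega), if_pos (by omega), zero_add]
          have := WittVector.iterate_verschiebung_coeff
            (WittVector.teichmuller p (x.coeff j)) j 0
          rw [zero_add] at this
          rw [this, WittVector.teichmuller_coeff_zero]
        · rw [if_neg (by omega), if_neg (by omega), zero_add]
          obtain ⟨k, rfl⟩ : ∃ k, j = k + n := ⟨j - n, by omega⟩
          rw [WittVector.iterate_verschiebung_coeff]
          exact WittVector.teichmuller_coeff_pos p _ k (by omega)

lemma sum_teich_eq_init (x : 𝕎 R) (n : ℕ) :
    (∑ i ∈ Finset.range n,
      WittVector.verschiebung^[i] (WittVector.teichmuller p (x.coeff i)))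
      = WittVector.init n x := by
  ext j
  rw [coeff_sum_teich]
  simp [WittVector.init, WittVector.select, WittVector.coeff_mk]

lemma tail_eq_iterate_verschiebung (x : 𝕎 R) (n : ℕ) :
    WittVector.tail n x
      = WittVector.verschiebung^[n] (WittVector.mk p fun j => x.coeff (j + n)) := by
  ext j
  have hsel : (WittVector.tail n x).coeff j = if n ≤ j then x.coeff j else 0 := by
    simp [WittVector.tail, WittVector.select, WittVector.coeff_mk]
  rw [hsel]
  by_cases h : n ≤ j
  · obtain ⟨k, rfl⟩ : ∃ k, j = k + n := ⟨j - n, by omega⟩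
    rw [if_pos h, WittVector.iterate_verschiebung_coeff]
    simp [WittVector.coeff_mk]
  · rw [if_neg h, iterate_verschiebung_coeff_of_lt _ (by omega)]

lemma exists_iterate_verschiebung_eq (n : ℕ) (z : 𝕎 R) :
    ∃ w : 𝕎 R, WittVector.verschiebung^[n] z = w * (p : 𝕎 R) ^ n := by
  induction n with
  | zero => exact ⟨z, by simp⟩
  | succ n ih =>
      obtain ⟨w, hw⟩ := ih
      rw [Function.iterate_succ_apply', hw]
      have hcast : (p : 𝕎 R) ^ n = ((p ^ n : ℕ) : 𝕎 R) := by push_cast; ring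
      have hsmul : w * (p : 𝕎 R) ^ n = (p ^ n : ℕ) • w := by rw [nsmul_eq_mul, mul_comm, hcast]
      rw [hsmul, map_nsmul]
      obtain ⟨w', hw'⟩ := verschiebung_mul_p_comm w
      refine ⟨w', ?_⟩
      rw [hw', nsmul_eq_mul]
      push_cast
      ring

/-- Master expansion: every Witt vector over a perfect ring is, modulo `p^n`, a sum of
Teichmüller representatives of `p^i`-th roots of its coefficients. -/
lemma witt_expand (x : 𝕎 R) (n : ℕ) :
    ∃ w : 𝕎 R, x = (∑ i ∈ Finset.range n,
        WittVector.teichmuller p ((iterateFrobeniusEquiv R p i).symm (x.coeff i)) * (p : 𝕎 R) ^ i)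
      + w * (p : 𝕎 R) ^ n := by
  obtain ⟨w, hw⟩ := exists_iterate_verschiebung_eq n (WittVector.mk p fun j => x.coeff (j + n))
  refine ⟨w, ?_⟩
  have h1 : (∑ i ∈ Finset.range n,
      WittVector.teichmuller p ((iterateFrobeniusEquiv R p i).symm (x.coeff i)) * (p : 𝕎 R) ^ i)
      = WittVector.init n x := by
    rw [← sum_teich_eq_init]
    exact Finset.sum_congr rfl fun i _ => (iterate_verschiebung_teichmuller i _).symm
  rw [h1, ← hw, ← tail_eq_iterate_verschiebung, WittVector.init_add_tail]

end WittExpand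
theorem stmt11 (p : ℕ) [Fact p.Prime]
    (R : Type*) [CommRing R] [CharP R p] [PerfectRing R p]
    (Atilde : Type*) [CommRing Atilde] [IsAdicComplete (Ideal.span {(p : Atilde)}) Atilde]
    (A : Type*) [CommRing A] [IsAdicComplete (Ideal.span {(p : A)}) A]
    (q : Atilde →+* A) (hq : Function.Surjective q) (hker : RingHom.ker q ^ 2 = ⊥) :
    ∀ f : WittVector p R →+* A, ∃! ftilde : WittVector p R →+* Atilde, q.comp ftilde = f := by
  classical
  intro f
  have hp' : p.Prime := Fact.out
  obtain ⟨m₀, hm₀⟩ : ∃ m, p = m + 1 := ⟨p - 1, by have := hp'.pos; omega⟩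
  -- the kernel is square-zero
  have hker0 : ∀ {a b : Atilde}, q a = 0 → q b = 0 → a * b = 0 := by
    intro a b ha hb
    have hmem : a * b ∈ RingHom.ker q ^ 2 := by
      rw [sq]
      exact Ideal.mul_mem_mul (RingHom.mem_ker.mpr ha) (RingHom.mem_ker.mpr hb)
    rw [hker] at hmem
    simpa using hmem
  -- binomial consequences of square-zero kernel
  have H2 : ∀ (w κ : Atilde), q κ = 0 → ∀ n : ℕ,
      ∃ c : Atilde, (w + κ) ^ p ^ n = w ^ p ^ n + (p : Atilde) ^ n * c := by
    intro w κ hκ n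
    have hκκ : κ * κ = 0 := hker0 hκ hκ
    have hpn : p ^ n - 1 + 1 = p ^ n := by
      have := Nat.one_le_pow n p hp'.pos
      omega
    refine ⟨w ^ (p ^ n - 1) * κ, ?_⟩
    have := Stmt11Aux.sqz_add_pow hκκ w (p ^ n - 1)
    rw [hpn] at this
    rw [this]
    have hcast : ((p ^ n - 1 : ℕ) : Atilde) + 1 = ((p : Atilde)) ^ n := by
      have : ((p ^ n - 1 : ℕ) : Atilde) + 1 = ((p ^ n - 1 + 1 : ℕ) : Atilde) := by push_cast; ring
      rw [this, hpn]
      push_cast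
      ring
    rw [hcast]
    ring
  have H1 : ∀ (w κ : Atilde), q κ = 0 →
      ∃ c : Atilde, (w + κ) ^ p = w ^ p + (p : Atilde) * c := by
    intro w κ hκ
    obtain ⟨c, hc⟩ := H2 w κ hκ 1
    simp only [pow_one] at hc
    exact ⟨c, hc⟩
  -- divisibility ↔ membership in powers of the `p`-adic filtration
  have hmemA' : ∀ (n : ℕ) (a : Atilde),
      a ∈ ((Ideal.span {(p : Atilde)}) ^ n • ⊤ : Submodule Atilde Atilde) ↔ (p : Atilde) ^ n ∣ a := by
    intro n a
    rw [Ideal.smul_eq_mul, Ideal.mul_top, Ideal.span_singleton_pow, Ideal.mem_span_singleton]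
  have hmemA : ∀ (n : ℕ) (a : A),
      a ∈ ((Ideal.span {(p : A)}) ^ n • ⊤ : Submodule A A) ↔ (p : A) ^ n ∣ a := by
    intro n a
    rw [Ideal.smul_eq_mul, Ideal.mul_top, Ideal.span_singleton_pow, Ideal.mem_span_singleton]
  have hausA' : ∀ a : Atilde, (∀ n : ℕ, (p : Atilde) ^ n ∣ a) → a = 0 := by
    intro a ha
    refine IsHausdorff.haus (inferInstance : IsHausdorff (Ideal.span {(p : Atilde)}) Atilde) a
      fun n => ?_
    rw [SModEq.sub_mem, sub_zero, hmemA']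
    exact ha n
  have hausA : ∀ a : A, (∀ n : ℕ, (p : A) ^ n ∣ a) → a = 0 := by
    intro a ha
    refine IsHausdorff.haus (inferInstance : IsHausdorff (Ideal.span {(p : A)}) A) a fun n => ?_
    rw [SModEq.sub_mem, sub_zero, hmemA]
    exact ha n
  -- a set-theoretic section of `q`
  choose s hs using hq
  -- main definitions
  set Xt : WittVector p R → ℕ → WittVector p Atilde := fun x n =>
    WittVector.mk p fun i =>
      s (f (WittVector.teichmuller p ((iterateFrobeniusEquiv R p (n + 1)).symm (x.coeff i)))) ^ p with hXt
  set u : WittVector p R → ℕ → Atilde := fun x n =>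
    WittVector.ghostComponent n (Xt x n) with hu
  have hXtc : ∀ (x : WittVector p R) (n i : ℕ),
      (Xt x n).coeff i = s (f (WittVector.teichmuller p ((iterateFrobeniusEquiv R p (n + 1)).symm (x.coeff i)))) ^ p := by
    intro x n i
    rw [hXt]
    simp [WittVector.coeff_mk]
  -- the quotient ring mod p
  set π : Atilde →+* Atilde ⧸ Ideal.span {(p : Atilde)} :=
    Ideal.Quotient.mk (Ideal.span {(p : Atilde)}) with hπ
  have hπp : ∀ a : Atilde, π ((p : Atilde) * a) = 0 := by
    intro a
    rw [hπ, Ideal.Quotient.eq_zero_iff_mem]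
    exact Ideal.mul_mem_right _ _ (Ideal.subset_span (Set.mem_singleton _))
  -- the ring homomorphism `h : R → Atilde/p`, r ↦ (s (f [r]))^p mod p
  obtain ⟨h, hh⟩ : ∃ h : R →+* Atilde ⧸ Ideal.span {(p : Atilde)},
      ∀ r, h r = π (s (f (WittVector.teichmuller p r)) ^ p) := by
    have hmod : ∀ w κ : Atilde, q κ = 0 → π ((w + κ) ^ p) = π (w ^ p) := by
      intro w κ hκ
      obtain ⟨c, hc⟩ := H1 w κ hκ
      rw [hc, map_add, hπp, add_zero]
    have hmod' : ∀ w w' : Atilde, q w = q w' → π (w ^ p) = π (w' ^ p) := by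
      intro w w' hww
      have : w = w' + (w - w') := by ring
      rw [this, hmod w' (w - w') (by rw [map_sub, hww, sub_self])]
    refine ⟨{ toFun := fun r => π (s (f (WittVector.teichmuller p r)) ^ p),
              map_one' := ?_, map_mul' := ?_, map_zero' := ?_, map_add' := ?_ }, fun _ => rfl⟩
    · -- map_one
      have h1 : q (s (f (WittVector.teichmuller p (1 : R)))) = q 1 := by
        simp [hs]
      rw [hmod' _ 1 h1, one_pow, map_one]
    · -- map_mul
      intro a b
      have h1 : q (s (f (WittVector.teichmuller p (a * b))))
          = q (s (f (WittVector.teichmuller p a)) * s (f (WittVector.teichmuller p b))) := by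
        simp [hs]
      rw [hmod' _ _ h1, mul_pow, map_mul]
    · -- map_zero
      have h0 : q (s (f (WittVector.teichmuller p (0 : R)))) = q 0 := by
        simp [hs]
      rw [hmod' _ 0 h0, zero_pow hp'.ne_zero, map_zero]
    · -- map_add
      intro a b
      obtain ⟨z, hz⟩ := teichmuller_add_defect (p := p) a b
      have h1 : q (s (f (WittVector.teichmuller p (a + b))))
          = q (s (f (WittVector.teichmuller p a)) + s (f (WittVector.teichmuller p b))
              + s (f z) * (p : Atilde)) := by
        simp [hs, hz]
      rw [hmod' _ _ h1]
      -- now kill the `p`-multiple and use the children's binomial theorem mod p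
      set X := s (f (WittVector.teichmuller p a)) with hX
      set Y := s (f (WittVector.teichmuller p b)) with hY
      set Z := s (f z) with hZ
      have hXY : π ((X + Y + Z * (p : Atilde)) ^ p) = π ((X + Y) ^ p) := by
        have hdvd : (p : Atilde) ∣ (X + Y + Z * (p : Atilde)) ^ p - (X + Y) ^ p := by
          have h2 : (X + Y + Z * (p : Atilde)) - (X + Y) ∣
              (X + Y + Z * (p : Atilde)) ^ p - (X + Y) ^ p := sub_dvd_pow_sub_pow _ _ p
          refine dvd_trans ?_ h2
          refine Dvd.intro Z ?_
          ring
        obtain ⟨c, hc⟩ := hdvd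
        have : (X + Y + Z * (p : Atilde)) ^ p = (X + Y) ^ p + (p : Atilde) * c := by
          rw [← hc]; ring
        rw [this, map_add, hπp, add_zero]
      rw [hXY]
      have hfermat := add_pow_prime_eq hp' X Y
      rw [hfermat, map_add, map_add, mul_assoc, mul_assoc, hπp, add_zero]
  -- two Witt vectors over `Atilde` with the same reduction mod p have ghost components
  -- congruent mod p^(n+1)
  have key0 : ∀ (n : ℕ) (X Y : WittVector p Atilde), WittVector.map π X = WittVector.map π Y →
      (p : Atilde) ^ (n + 1) ∣ WittVector.ghostComponent n X - WittVector.ghostComponent n Y := by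
    intro n X Y hXY
    refine Stmt11Aux.ghost_dvd n fun i => ?_
    have hcoeff : π (X.coeff i) = π (Y.coeff i) := by
      have := congrArg (fun z : WittVector p (Atilde ⧸ Ideal.span {(p : Atilde)}) => z.coeff i) hXY
      simpa [WittVector.map_coeff] using this
    rw [← Ideal.mem_span_singleton]
    rw [hπ] at hcoeff
    exact (Submodule.Quotient.eq _).mp hcoeff
  -- the reduction of `Xt x n` mod p is a ring homomorphism applied to `x`
  have hmapXt : ∀ (x : WittVector p R) (n : ℕ),
      WittVector.map π (Xt x n)
        = WittVector.map (h.comp (((iterateFrobeniusEquiv R p (n + 1)).symm : R ≃+* R) : R →+* R)) x := by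
    intro x n
    ext i
    rw [WittVector.map_coeff, WittVector.map_coeff, hXtc]
    rw [RingHom.comp_apply, hh]
    rfl
  have key_add : ∀ (x y : WittVector p R) (n : ℕ),
      (p : Atilde) ^ (n + 1) ∣ u (x + y) n - (u x n + u y n) := by
    intro x y n
    have e1 : u x n + u y n = WittVector.ghostComponent n (Xt x n + Xt y n) := (map_add _ _ _).symm
    rw [hu]
    simp only
    rw [e1]
    refine key0 n _ _ ?_
    conv_rhs => rw [map_add, hmapXt, hmapXt]
    rw [hmapXt, map_add]
  have key_mul : ∀ (x y : WittVector p R) (n : ℕ),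
      (p : Atilde) ^ (n + 1) ∣ u (x * y) n - u x n * u y n := by
    intro x y n
    have e1 : u x n * u y n = WittVector.ghostComponent n (Xt x n * Xt y n) := (map_mul _ _ _).symm
    rw [hu]
    simp only
    rw [e1]
    refine key0 n _ _ ?_
    conv_rhs => rw [map_mul, hmapXt, hmapXt]
    rw [hmapXt, map_mul]
  have key_one : ∀ n : ℕ, (p : Atilde) ^ (n + 1) ∣ u 1 n - 1 := by
    intro n
    have e1 : (1 : Atilde) = WittVector.ghostComponent n (1 : WittVector p Atilde) :=
      (map_one _).symm
    rw [hu]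
    simp only
    rw [e1]
    refine key0 n _ _ ?_
    rw [hmapXt, map_one, map_one]
  -- Cauchy property of the approximating sequence
  have key_step : ∀ (x : WittVector p R) (n : ℕ),
      (p : Atilde) ^ (n + 1) ∣ u x (n + 1) - u x n := by
    intro x n
    rw [hu]
    simp only
    rw [Stmt11Aux.ghost_sum, Stmt11Aux.ghost_sum, Finset.sum_range_succ]
    have hsub : ∀ T S1 S2 : Atilde, S1 + T - S2 = S1 - S2 + T := by intro T S1 S2; ring
    rw [hsub, ← Finset.sum_sub_distrib]
    refine dvd_add (Finset.dvd_sum fun i hi => ?_)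
      ⟨(Xt x (n + 1)).coeff (n + 1) ^ p ^ (n + 1 - (n + 1)), by ring⟩
    rw [Finset.mem_range, Nat.lt_succ_iff] at hi
    have hroot : ((iterateFrobeniusEquiv R p (n + 1 + 1)).symm (x.coeff i)) ^ p
        = (iterateFrobeniusEquiv R p (n + 1)).symm (x.coeff i) := by
      have h1 := E_pow_partial (p := p) (k := n + 2) (m := 1) (by omega) (x.coeff i)
      rw [pow_one] at h1
      exact h1
    have hqa : q ((Xt x (n + 1)).coeff i)
        = q (s (f (WittVector.teichmuller p
            ((iterateFrobeniusEquiv R p (n + 1)).symm (x.coeff i))))) := by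
      rw [hXtc, hs, map_pow, hs, ← map_pow, ← map_pow, hroot]
    have hκ : q ((Xt x (n + 1)).coeff i
        - s (f (WittVector.teichmuller p
            ((iterateFrobeniusEquiv R p (n + 1)).symm (x.coeff i))))) = 0 := by
      rw [map_sub, hqa, sub_self]
    obtain ⟨c, hc⟩ := H1 (s (f (WittVector.teichmuller p
        ((iterateFrobeniusEquiv R p (n + 1)).symm (x.coeff i))))) _ hκ
    rw [add_sub_cancel] at hc
    have hdvd1 : (p : Atilde) ∣ (Xt x (n + 1)).coeff i ^ p - (Xt x n).coeff i := by
      rw [hc, hXtc]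
      exact ⟨c, by ring⟩
    have hdvd2 := dvd_sub_pow_of_dvd_sub hdvd1 (n - i)
    have hexp : ((Xt x (n + 1)).coeff i ^ p) ^ p ^ (n - i)
        = (Xt x (n + 1)).coeff i ^ p ^ (n + 1 - i) := by
      rw [← pow_mul]
      congr 1
      have h3 : n + 1 - i = n - i + 1 := by omega
      rw [h3, pow_succ']
    rw [hexp] at hdvd2
    rw [← mul_sub]
    have hsplit : (p : Atilde) ^ (n + 1) = (p : Atilde) ^ i * (p : Atilde) ^ (n - i + 1) := by
      rw [← pow_add]
      congr 1
      omega
    rw [hsplit]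
    exact mul_dvd_mul_left _ hdvd2
  -- compatibility with `q` and `f`
  have key_comp : ∀ (x : WittVector p R) (n : ℕ),
      (p : A) ^ (n + 1) ∣ q (u x n) - f x := by
    intro x n
    rw [hu]
    simp only
    rw [Stmt11Aux.ghost_sum, map_sum]
    have hterm : ∀ i ∈ Finset.range (n + 1), q ((p : Atilde) ^ i * (Xt x n).coeff i ^ p ^ (n - i))
        = f (WittVector.teichmuller p ((iterateFrobeniusEquiv R p i).symm (x.coeff i))
            * (p : WittVector p R) ^ i) := by
      intro i hi
      rw [Finset.mem_range, Nat.lt_succ_iff] at hi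
      rw [map_mul, map_pow, map_natCast, hXtc, map_pow, map_pow, hs]
      have hexp : (f (WittVector.teichmuller p
            ((iterateFrobeniusEquiv R p (n + 1)).symm (x.coeff i))) ^ p) ^ p ^ (n - i)
          = f (WittVector.teichmuller p ((iterateFrobeniusEquiv R p i).symm (x.coeff i))) := by
        have e1 : p * p ^ (n - i) = p ^ (n - i + 1) := (pow_succ' p (n - i)).symm
        rw [← pow_mul, e1, ← map_pow, ← map_pow]
        congr 2
        have h1 := E_pow_partial (p := p) (k := n + 1) (m := n - i + 1) (by omega) (x.coeff i)
        have h2 : n + 1 - (n - i + 1) = i := by omega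
        rw [h2] at h1
        exact h1
      rw [hexp, map_mul, map_pow, map_natCast, mul_comm]
    rw [Finset.sum_congr rfl hterm, ← map_sum]
    obtain ⟨w, hw⟩ := witt_expand (p := p) x (n + 1)
    have hfx : f x = f (∑ i ∈ Finset.range (n + 1),
        WittVector.teichmuller p ((iterateFrobeniusEquiv R p i).symm (x.coeff i))
          * (p : WittVector p R) ^ i) + f w * (p : A) ^ (n + 1) := by
      conv_lhs => rw [hw]
      rw [map_add, map_mul, map_pow, map_natCast]
    rw [hfx]
    exact ⟨-(f w), by ring⟩
  -- the limit of the approximating sequence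
  have cauchy : ∀ x : WittVector p R, ∀ {m n : ℕ}, m ≤ n →
      u x m ≡ u x n [SMOD ((Ideal.span {(p : Atilde)}) ^ m • ⊤ : Submodule Atilde Atilde)] := by
    intro x m n hmn
    rw [SModEq.sub_mem, hmemA']
    have : ∀ k : ℕ, (p : Atilde) ^ m ∣ u x m - u x (m + k) := by
      intro k
      induction k with
      | zero => simp
      | succ k ih =>
          have h1 : (p : Atilde) ^ m ∣ u x (m + k + 1) - u x (m + k) :=
            (pow_dvd_pow _ (by omega)).trans (key_step x (m + k))
          have h2 : u x m - u x (m + k + 1)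
              = (u x m - u x (m + k)) - (u x (m + k + 1) - u x (m + k)) := by ring
          rw [show m + (k + 1) = m + k + 1 from rfl, h2]
          exact dvd_sub ih h1
    obtain ⟨k, rfl⟩ : ∃ k, n = m + k := ⟨n - m, by omega⟩
    exact this k
  choose L hL using fun x : WittVector p R =>
    IsPrecomplete.prec (inferInstance : IsPrecomplete (Ideal.span {(p : Atilde)}) Atilde)
      (cauchy x)
  have hLd : ∀ (x : WittVector p R) (n : ℕ), (p : Atilde) ^ n ∣ L x - u x n := by
    intro x n
    have := hL x n
    rw [SModEq.sub_mem, hmemA'] at this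
    exact (dvd_sub_comm).mp this
  -- `L` is a ring homomorphism
  have hone : L 1 = 1 := by
    rw [← sub_eq_zero]
    refine hausA' _ fun n => ?_
    have h1 : L 1 - 1 = (L 1 - u 1 n) + (u 1 n - 1) := by ring
    rw [h1]
    exact dvd_add (hLd 1 n) ((pow_dvd_pow _ (by omega)).trans (key_one n))
  have hadd : ∀ x y, L (x + y) = L x + L y := by
    intro x y
    rw [← sub_eq_zero]
    refine hausA' _ fun n => ?_
    have h1 : L (x + y) - (L x + L y)
        = (L (x + y) - u (x + y) n) + (u (x + y) n - (u x n + u y n))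
          + ((u x n - L x) + (u y n - L y)) := by ring
    rw [h1]
    exact dvd_add (dvd_add (hLd (x + y) n)
        ((pow_dvd_pow _ (by omega)).trans (key_add x y n)))
      (dvd_add (dvd_sub_comm.mp (hLd x n)) (dvd_sub_comm.mp (hLd y n)))
  have hmul : ∀ x y, L (x * y) = L x * L y := by
    intro x y
    rw [← sub_eq_zero]
    refine hausA' _ fun n => ?_
    have h1 : L (x * y) - L x * L y
        = (L (x * y) - u (x * y) n) + (u (x * y) n - u x n * u y n)
          + ((u x n - L x) * u y n + L x * (u y n - L y)) := by ring
    rw [h1]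
    refine dvd_add (dvd_add (hLd (x * y) n)
        ((pow_dvd_pow _ (by omega)).trans (key_mul x y n))) ?_
    exact dvd_add ((dvd_sub_comm.mp (hLd x n)).mul_right _)
      ((dvd_sub_comm.mp (hLd y n)).mul_left _)
  have hzero : L 0 = 0 := by
    have h1 := hadd 0 0
    rw [add_zero] at h1
    have h2 : L 0 + L 0 = L 0 + 0 := by rw [← h1, add_zero]
    exact add_left_cancel h2
  -- assemble the ring homomorphism
  set ftilde : WittVector p R →+* Atilde :=
    { toFun := L, map_one' := hone, map_mul' := hmul, map_zero' := hzero,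
      map_add' := hadd } with hftilde
  have hftc : ∀ x, ftilde x = L x := fun _ => rfl
  have hcomp : q.comp ftilde = f := by
    refine RingHom.ext fun x => ?_
    rw [RingHom.comp_apply, hftc]
    rw [← sub_eq_zero]
    refine hausA _ fun n => ?_
    have h1 : q (L x) - f x = q (L x - u x n) + (q (u x n) - f x) := by
      rw [map_sub]; ring
    rw [h1]
    refine dvd_add ?_ ((pow_dvd_pow _ (by omega)).trans (key_comp x n))
    obtain ⟨c, hc⟩ := hLd x n
    refine ⟨q c, ?_⟩
    rw [hc, map_mul, map_pow, map_natCast]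
  -- uniqueness of lifts
  have uniq : ∀ g₁ g₂ : WittVector p R →+* Atilde, q.comp g₁ = f → q.comp g₂ = f → g₁ = g₂ := by
    intro g₁ g₂ h₁ h₂
    have hq12 : ∀ z, q (g₁ z) = q (g₂ z) := by
      intro z
      have e1 := RingHom.congr_fun h₁ z
      have e2 := RingHom.congr_fun h₂ z
      rw [RingHom.comp_apply] at e1 e2
      rw [e1, e2]
    have hteich : ∀ r : R,
        g₁ (WittVector.teichmuller p r) = g₂ (WittVector.teichmuller p r) := by
      intro r
      rw [← sub_eq_zero]
      refine hausA' _ fun n => ?_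
      have hc : (WittVector.teichmuller p ((iterateFrobeniusEquiv R p n).symm r)) ^ p ^ n
          = WittVector.teichmuller p r := by
        rw [← map_pow, E_pow]
      have hκ : q (g₁ (WittVector.teichmuller p ((iterateFrobeniusEquiv R p n).symm r))
          - g₂ (WittVector.teichmuller p ((iterateFrobeniusEquiv R p n).symm r))) = 0 := by
        rw [map_sub, hq12, sub_self]
      obtain ⟨c, hcc⟩ :=
        H2 (g₂ (WittVector.teichmuller p ((iterateFrobeniusEquiv R p n).symm r))) _ hκ n
      rw [add_sub_cancel] at hcc
      refine ⟨c, ?_⟩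
      rw [← hc, map_pow, map_pow, hcc]
      ring
    refine RingHom.ext fun x => ?_
    rw [← sub_eq_zero]
    refine hausA' _ fun n => ?_
    obtain ⟨w, hw⟩ := witt_expand (p := p) x n
    have hg : ∀ g : WittVector p R →+* Atilde, g x = (∑ i ∈ Finset.range n,
        g (WittVector.teichmuller p ((iterateFrobeniusEquiv R p i).symm (x.coeff i)))
          * (p : Atilde) ^ i) + g w * (p : Atilde) ^ n := by
      intro g
      conv_lhs => rw [hw]
      rw [map_add, map_mul, map_pow, map_natCast, map_sum]
      congr 1
      refine Finset.sum_congr rfl fun i _ => ?_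
      rw [map_mul, map_pow, map_natCast]
    rw [hg g₁, hg g₂]
    have hsum : (∑ i ∈ Finset.range n,
        g₁ (WittVector.teichmuller p ((iterateFrobeniusEquiv R p i).symm (x.coeff i)))
          * (p : Atilde) ^ i)
        = ∑ i ∈ Finset.range n,
        g₂ (WittVector.teichmuller p ((iterateFrobeniusEquiv R p i).symm (x.coeff i)))
          * (p : Atilde) ^ i :=
      Finset.sum_congr rfl fun i _ => by rw [hteich]
    rw [hsum]
    exact ⟨g₁ w - g₂ w, by ring⟩
  exact ⟨ftilde, hcomp, fun g hg => uniq g ftilde hg hcomp⟩
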